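/- Let K be a category with binary coproducts and zero morphisms, and let G : K → K be an endofunctor. Then the endofunctor X ↦ G X ⨿ X carries a monad structure whose unit is the coprojection inr : X → G X ⨿ X and whose multiplication is the composite G(G X ⨿ X) ⨿ (G X ⨿ X) → G X ⨿ X given by first applying G([0, id_X]) ⨿ id (where [0, id_X] : G X ⨿ X → X is the cotuple of the zero morphism G X → X and the identity) and then the cotuple [inl, id] : G X ⨿ (G X ⨿ X) → G X ⨿ X; that is, these data satisfy the monad unit and associativity laws. -/

import Mathlib

open CategoryTheory CategoryTheory.Limits

/-- The object part of the endofunctor `X ↦ G X ⨿ X`. -/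
noncomputable def Tobj {K : Type*} [Category K] [HasBinaryCoproducts K]
    (G : K ⥤ K) (X : K) : K :=
  G.obj X ⨿ X

/-- The morphism part of the endofunctor `X ↦ G X ⨿ X`. -/
noncomputable def Tmap {K : Type*} [Category K] [HasBinaryCoproducts K]
    (G : K ⥤ K) {X Y : K} (f : X ⟶ Y) : Tobj G X ⟶ Tobj G Y :=
  coprod.map (G.map f) f

/-- The unit: the coprojection `inr : X → G X ⨿ X`. -/
noncomputable def unitT {K : Type*} [Category K] [HasBinaryCoproducts K]
    (G : K ⥤ K) (X : K) : X ⟶ Tobj G X :=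
  coprod.inr

/-- The multiplication: `G(G X ⨿ X) ⨿ (G X ⨿ X) → G X ⨿ X`, given by first applying
`G([0, id_X]) ⨿ id` and then the cotuple `[inl, id]`. -/
noncomputable def multT {K : Type*} [Category K] [HasBinaryCoproducts K]
    [HasZeroMorphisms K] (G : K ⥤ K) (X : K) : Tobj G (Tobj G X) ⟶ Tobj G X :=
  coprod.map (G.map (coprod.desc 0 (𝟙 X))) (𝟙 (Tobj G X)) ≫
    coprod.desc coprod.inl (𝟙 (Tobj G X))

/-- In a category with binary coproducts and zero morphisms, the endofunctor
`X ↦ G X ⨿ X` together with `unitT` and `multT` satisfies naturality as well as the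
monad unit and associativity laws. -/
theorem gplusid_is_monad {K : Type*} [Category K] [HasBinaryCoproducts K]
    [HasZeroMorphisms K] (G : K ⥤ K) :
    (∀ (X Y : K) (f : X ⟶ Y), f ≫ unitT G Y = unitT G X ≫ Tmap G f) ∧
    (∀ (X Y : K) (f : X ⟶ Y), Tmap G (Tmap G f) ≫ multT G Y = multT G X ≫ Tmap G f) ∧
    (∀ X : K, unitT G (Tobj G X) ≫ multT G X = 𝟙 (Tobj G X)) ∧
    (∀ X : K, Tmap G (unitT G X) ≫ multT G X = 𝟙 (Tobj G X)) ∧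
    (∀ X : K, multT G (Tobj G X) ≫ multT G X = Tmap G (multT G X) ≫ multT G X) := by
  refine ⟨fun X Y f => by show f ≫ (coprod.inr : Y ⟶ G.obj Y ⨿ Y) = coprod.inr ≫ coprod.map (G.map f) f; simp, fun X Y f => ?_, fun X => ?_, fun X => ?_, fun X => ?_⟩
  · simp only [Tmap, multT, Tobj]
    show coprod.map (G.map (coprod.map (G.map f) f)) (coprod.map (G.map f) f) ≫ coprod.map (G.map (coprod.desc 0 (𝟙 Y))) (𝟙 (G.obj Y ⨿ Y)) ≫ coprod.desc coprod.inl (𝟙 (G.obj Y ⨿ Y)) = (coprod.map (G.map (coprod.desc 0 (𝟙 X))) (𝟙 (G.obj X ⨿ X)) ≫ coprod.desc coprod.inl (𝟙 (G.obj X ⨿ X))) ≫ coprod.map (G.map f) f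
    ext <;> simp [← G.map_comp, coprod.inl_desc, coprod.inr_desc, coprod.inl_desc_assoc, coprod.inr_desc_assoc]
    rw [← Category.assoc, ← Category.assoc, ← G.map_comp, ← G.map_comp]
    congr 2
    ext <;> simp [coprod.inl_desc, coprod.inr_desc, coprod.inl_desc_assoc, coprod.inr_desc_assoc]
  · show (coprod.inr : G.obj X ⨿ X ⟶ G.obj (G.obj X ⨿ X) ⨿ (G.obj X ⨿ X)) ≫ (coprod.map (G.map (coprod.desc 0 (𝟙 X))) (𝟙 (G.obj X ⨿ X)) ≫ coprod.desc coprod.inl (𝟙 (G.obj X ⨿ X))) = 𝟙 (G.obj X ⨿ X)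
    simp [unitT, multT, Tobj, coprod.inl_desc, coprod.inr_desc, coprod.inl_desc_assoc, coprod.inr_desc_assoc]
  · simp only [Tmap, multT, unitT, Tobj]
    show coprod.map (G.map coprod.inr) coprod.inr ≫ (coprod.map (G.map (coprod.desc 0 (𝟙 X))) (𝟙 (G.obj X ⨿ X)) ≫ coprod.desc coprod.inl (𝟙 (G.obj X ⨿ X))) = 𝟙 (G.obj X ⨿ X)
    ext <;> simp [← G.map_comp, coprod.inl_desc, coprod.inr_desc, coprod.inl_desc_assoc, coprod.inr_desc_assoc]
    rw [← Category.assoc, ← G.map_comp]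
    simp [coprod.inl_desc, coprod.inr_desc, coprod.inl_desc_assoc, coprod.inr_desc_assoc]
  · simp only [Tmap, multT, Tobj]
    show (coprod.map (G.map (coprod.desc 0 (𝟙 (G.obj X ⨿ X)))) (𝟙 (G.obj (G.obj X ⨿ X) ⨿ (G.obj X ⨿ X))) ≫ coprod.desc coprod.inl (𝟙 (G.obj (G.obj X ⨿ X) ⨿ (G.obj X ⨿ X)))) ≫ (coprod.map (G.map (coprod.desc 0 (𝟙 X))) (𝟙 (G.obj X ⨿ X)) ≫ coprod.desc coprod.inl (𝟙 (G.obj X ⨿ X))) = coprod.map (G.map (coprod.map (G.map (coprod.desc 0 (𝟙 X))) (𝟙 (G.obj X ⨿ X)) ≫ coprod.desc coprod.inl (𝟙 (G.obj X ⨿ X)))) (coprod.map (G.map (coprod.desc 0 (𝟙 X))) (𝟙 (G.obj X ⨿ X)) ≫ coprod.desc coprod.inl (𝟙 (G.obj X ⨿ X))) ≫ (coprod.map (G.map (coprod.desc 0 (𝟙 X))) (𝟙 (G.obj X ⨿ X)) ≫ coprod.desc coprod.inl (𝟙 (G.obj X ⨿ X)))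
    ext <;> simp [← G.map_comp, coprod.inl_desc, coprod.inr_desc, coprod.inl_desc_assoc, coprod.inr_desc_assoc]
    rw [← Category.assoc, ← Category.assoc, ← G.map_comp, ← G.map_comp]
    congr 2
    ext <;> simp [coprod.inl_desc, coprod.inr_desc, coprod.inl_desc_assoc, coprod.inr_desc_assoc]
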